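/- Let B be a symmetric n×n real matrix with zero diagonal whose associated graph G(B) (edge {i,j} iff B(i,j)≠0) is not bipartite, and let g be the odd-girth of G(B) (the length of a shortest odd cycle). Then every principal minor of B of odd order strictly less than g is zero, and B has a nonzero principal minor of order g. Consequently, g equals the smallest odd order of a nonsingular principal submatrix of B. -/

import Mathlib

open Matrix Finset

lemma aux_cycle_map {α : Type*} [Fintype α] [DecidableEq α] (σ : Equiv.Perm α) (a : α)
    (ha : σ a ≠ a) {ℓ : ℕ} (hℓ : ℓ = (σ.cycleOf a).support.card) :
    ∃ c : ZMod ℓ → α, Function.Injective c ∧ ∀ k, c (k + 1) = σ (c k) := by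
  have h2 : 2 ≤ ℓ := by rw [hℓ]; exact Equiv.Perm.two_le_card_support_cycleOf_iff.2 ha
  haveI : NeZero ℓ := ⟨by omega⟩
  have hmem : a ∈ (σ.cycleOf a).support :=
    Equiv.Perm.mem_support_cycleOf_iff.2 ⟨Equiv.Perm.SameCycle.refl _ _, Equiv.Perm.mem_support.2 ha⟩
  have hkey : ∀ m m' : ℕ, (σ ^ m) a = (σ ^ m') a ↔ m ≡ m' [MOD ℓ] := by
    intro m m'
    rw [hℓ]
    exact (Equiv.Perm.isCycleOn_support_cycleOf σ a).pow_apply_eq_pow_apply hmem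
  refine ⟨fun k => (σ ^ k.val) a, ?_, ?_⟩
  · intro k k' h
    rw [hkey] at h
    have : k.val = k'.val := by
      have h' : k.val % ℓ = k'.val % ℓ := h
      rwa [Nat.mod_eq_of_lt (ZMod.val_lt k), Nat.mod_eq_of_lt (ZMod.val_lt k')] at h'
    exact ZMod.natCast_rightInverse.injective this
  · intro k
    have hc : ∀ m : ℕ, (σ ^ ((m : ZMod ℓ)).val) a = (σ ^ m) a := by
      intro m
      rw [hkey]
      simpa [ZMod.val_natCast] using Nat.mod_mod_of_dvd m dvd_rfl |>.symm ▸ (Nat.mod_modEq m ℓ)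
    have h1 : (k : ZMod ℓ) + 1 = ((k.val + 1 : ℕ) : ZMod ℓ) := by
      push_cast [ZMod.natCast_val, ZMod.cast_id]; ring
    show (σ ^ ((k : ZMod ℓ) + 1).val) a = σ ((σ ^ k.val) a)
    rw [h1, hc, pow_succ']
    rfl

lemma aux_even_sum {s : Multiset ℕ} (hc : ∀ l ∈ s, Even l) : Even s.sum := by
  induction s using Multiset.induction with
  | empty => simp
  | cons a s ih =>
    rw [Multiset.sum_cons]
    exact (hc a (Multiset.mem_cons_self a s)).add
      (ih fun l hl => hc l (Multiset.mem_cons_of_mem hl))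

lemma aux_odd_mem {s : Multiset ℕ} (h : Odd s.sum) : ∃ l ∈ s, Odd l := by
  by_contra hcon
  push_neg at hcon
  simp only [Nat.not_odd_iff_even] at hcon
  exact (Nat.not_odd_iff_even.2 (aux_even_sum hcon)) h

lemma aux_part1 {n : ℕ} (B : Matrix (Fin n) (Fin n) ℝ) (hsym : B.IsSymm)
    (hdiag : ∀ i, B i i = 0) (g : ℕ)
    (hmin : ∀ l : ℕ, 3 ≤ l → Odd l →
      (∃ c : ZMod l → Fin n, Function.Injective c ∧ ∀ i, B (c i) (c (i + 1)) ≠ 0) →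
      g ≤ l)
    (μ : Finset (Fin n)) (hodd : Odd μ.card) (hlt : μ.card < g) :
    (B.submatrix (fun x : μ => (x : Fin n)) (fun x : μ => (x : Fin n))).det = 0 := by
  rw [Matrix.det_apply']
  refine Finset.sum_eq_zero fun σ _ => ?_
  rcases eq_or_ne (∏ i, B.submatrix (fun x : μ => (x : Fin n)) (fun x : μ => (x : Fin n)) (σ i) i) 0
    with h | h
  · rw [h, mul_zero]
  exfalso
  have hne : ∀ i : μ, B ((σ i : Fin n)) (i : Fin n) ≠ 0 := fun i =>
    Finset.prod_ne_zero_iff.1 h i (Finset.mem_univ i)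
  have hfix : ∀ i, σ i ≠ i := by
    intro i hi
    exact hne i (by rw [hi]; exact hdiag _)
  have hsupp : σ.support = Finset.univ := by
    ext i; simpa using hfix i
  have hcard : σ.support.card = μ.card := by
    rw [hsupp, Finset.card_univ, Fintype.card_coe]
  obtain ⟨l, hlmem, hlodd⟩ := aux_odd_mem (s := σ.cycleType) (by
    rwa [Equiv.Perm.sum_cycleType, hcard])
  have hl2 : 2 ≤ l := Equiv.Perm.two_le_of_mem_cycleType hlmem
  have hl3 : 3 ≤ l := by rcases hlodd with ⟨t, ht⟩; omega
  -- get a cycle factor of support card l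
  rw [Equiv.Perm.cycleType_def, Multiset.mem_map] at hlmem
  obtain ⟨f, hf, hfl⟩ := hlmem
  have hfsupp : f.support.Nonempty := by
    rw [← Finset.card_pos]
    have : f.support.card = l := hfl
    omega
  obtain ⟨a, ha⟩ := hfsupp
  have hfa : f = σ.cycleOf a := Equiv.Perm.cycle_is_cycleOf ha hf
  have hσa : σ a ≠ a := by
    have : a ∈ σ.support := by
      rw [hfa] at ha
      exact Equiv.Perm.support_cycleOf_le σ a ha
    exact Equiv.Perm.mem_support.1 this
  have hlcard : l = (σ.cycleOf a).support.card := by rw [← hfa]; exact hfl.symm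
  obtain ⟨c, hcinj, hcstep⟩ := aux_cycle_map σ a hσa hlcard
  have hge := hmin l hl3 hlodd ⟨fun k => (c k : Fin n), fun k k' hk =>
    hcinj (Subtype.ext hk), fun k => by
      show B (↑(c k)) (↑(c (k + 1))) ≠ 0
      rw [hcstep k, hsym.apply]
      exact hne (c k)⟩
  have hlle : l ≤ μ.card := by
    rw [hlcard, ← hcard]
    exact Finset.card_le_card (Equiv.Perm.support_cycleOf_le σ a)
  omega

lemma aux_subcycle {n g : ℕ} [NeZero g] (B : Matrix (Fin n) (Fin n) ℝ)
    (c : ZMod g → Fin n) (hcinj : Function.Injective c)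
    (hce : ∀ i, B (c i) (c (i + 1)) ≠ 0)
    (i : ZMod g) (d : ℕ) (hd1 : 1 ≤ d) (hdg : d + 1 ≤ g)
    (hchord : B (c (i + (d : ZMod g))) (c i) ≠ 0) :
    ∃ c' : ZMod (d + 1) → Fin n, Function.Injective c' ∧ ∀ k, B (c' k) (c' (k + 1)) ≠ 0 := by
  haveI : NeZero (d + 1) := ⟨Nat.succ_ne_zero d⟩
  have hvallt : ∀ k : ZMod (d + 1), k.val < g := fun k => lt_of_lt_of_le (ZMod.val_lt k) hdg
  refine ⟨fun k => c (i + (k.val : ZMod g)), ?_, ?_⟩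
  · intro k k' h
    have h2 : ((k.val : ZMod g)) = ((k'.val : ZMod g)) := add_left_cancel (hcinj h)
    have h3 : k.val = k'.val := by
      have e1 := ZMod.val_cast_of_lt (hvallt k)
      have e2 := ZMod.val_cast_of_lt (hvallt k')
      rw [← e1, ← e2, h2]
    exact ZMod.natCast_rightInverse.injective h3
  · intro k
    show B (c (i + (k.val : ZMod g))) (c (i + (((k + 1 : ZMod (d+1))).val : ZMod g))) ≠ 0
    have hk1 : (k + 1 : ZMod (d + 1)) = ((k.val + 1 : ℕ) : ZMod (d + 1)) := by
      push_cast [ZMod.natCast_val, ZMod.cast_id]; ring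
    rcases lt_or_eq_of_le (Nat.lt_succ_iff.1 (ZMod.val_lt k)) with hlt | heq
    · -- k.val < d : consecutive edge
      have hv : ((k + 1 : ZMod (d + 1))).val = k.val + 1 := by
        rw [hk1, ZMod.val_cast_of_lt (by omega)]
      rw [hv]
      have : (i + ((k.val + 1 : ℕ) : ZMod g)) = (i + (k.val : ZMod g)) + 1 := by
        push_cast; ring
      rw [this]
      exact hce _
    · -- k.val = d : closing chord
      have hv : ((k + 1 : ZMod (d + 1))).val = 0 := by
        rw [hk1, heq]
        simp [ZMod.natCast_self]
      rw [hv, heq]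
      simpa using hchord

lemma aux_nochord {n g : ℕ} (B : Matrix (Fin n) (Fin n) ℝ) (hsym : B.IsSymm)
    (hdiag : ∀ i, B i i = 0) (hgodd : Odd g) (hg3 : 3 ≤ g)
    (hmin : ∀ l : ℕ, 3 ≤ l → Odd l →
      (∃ c : ZMod l → Fin n, Function.Injective c ∧ ∀ i, B (c i) (c (i + 1)) ≠ 0) →
      g ≤ l)
    (c : ZMod g → Fin n) (hcinj : Function.Injective c)
    (hce : ∀ i, B (c i) (c (i + 1)) ≠ 0) :
    ∀ i j : ZMod g, B (c i) (c j) ≠ 0 → j = i + 1 ∨ i = j + 1 := by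
  haveI : NeZero g := ⟨by omega⟩
  intro i j hB
  set d : ℕ := (j - i).val with hd
  have hji : j = i + (d : ZMod g) := by
    rw [hd, ZMod.natCast_val, ZMod.cast_id]; ring
  have hdlt : d < g := ZMod.val_lt _
  have hdne : d ≠ 0 := by
    intro h0
    rw [h0] at hji
    simp at hji
    exact hB (hji ▸ hdiag (c i))
  by_contra hcon
  push_neg at hcon
  obtain ⟨h1, h2⟩ := hcon
  have hdne1 : d ≠ 1 := by
    intro h'
    exact h1 (by rw [hji, h']; push_cast; ring)
  have hdnegm1 : d ≠ g - 1 := by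
    intro h'
    apply h2
    rw [hji, h']
    have : ((g - 1 : ℕ) : ZMod g) = -1 := by
      have : ((g - 1 : ℕ) : ZMod g) = (g : ZMod g) - 1 := by
        push_cast [Nat.cast_sub (by omega : 1 ≤ g)]; ring
      rw [this, ZMod.natCast_self]; ring
    rw [this]; ring
  -- so 2 ≤ d ≤ g - 2
  have hd2 : 2 ≤ d := by omega
  have hdg2 : d ≤ g - 2 := by omega
  -- cycle 1: length d + 1, from i
  have hcyc1 : ∃ c' : ZMod (d + 1) → Fin n, Function.Injective c' ∧
      ∀ k, B (c' k) (c' (k + 1)) ≠ 0 := by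
    apply aux_subcycle B c hcinj hce i d (by omega) (by omega)
    rw [← hji, hsym.apply]
    exact hB
  -- cycle 2: length (g - d) + 1, from j
  have hcyc2 : ∃ c' : ZMod ((g - d) + 1) → Fin n, Function.Injective c' ∧
      ∀ k, B (c' k) (c' (k + 1)) ≠ 0 := by
    apply aux_subcycle B c hcinj hce j (g - d) (by omega) (by omega)
    have : j + ((g - d : ℕ) : ZMod g) = i := by
      have : ((g - d : ℕ) : ZMod g) = -(d : ZMod g) := by
        push_cast [Nat.cast_sub (by omega : d ≤ g)]
        rw [ZMod.natCast_self]; ring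
      rw [this, hji]; ring
    rw [this]
    exact hB
  have hg2 : g % 2 = 1 := Nat.odd_iff.1 hgodd
  rcases Nat.even_or_odd d with hde | hdo
  · have := hmin (d + 1) (by omega) (Even.add_one hde) hcyc1
    omega
  · have hodd2 : Odd (g - d + 1) := by
      rw [Nat.odd_iff]
      have := Nat.odd_iff.1 hdo
      omega
    have := hmin (g - d + 1) (by omega) hodd2 hcyc2
    omega

lemma aux_det_cycle {n g : ℕ} (B : Matrix (Fin n) (Fin n) ℝ) (hsym : B.IsSymm)
    (hdiag : ∀ i, B i i = 0) (hgodd : Odd g) (hg3 : 3 ≤ g)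
    (hmin : ∀ l : ℕ, 3 ≤ l → Odd l →
      (∃ c : ZMod l → Fin n, Function.Injective c ∧ ∀ i, B (c i) (c (i + 1)) ≠ 0) →
      g ≤ l)
    (c : ZMod g → Fin n) (hcinj : Function.Injective c)
    (hce : ∀ i, B (c i) (c (i + 1)) ≠ 0) [NeZero g] :
    (B.submatrix c c).det ≠ 0 := by
  have hnochord := aux_nochord B hsym hdiag hgodd hg3 hmin c hcinj hce
  set ρ : Equiv.Perm (ZMod g) := Equiv.addRight (1 : ZMod g) with hρ
  have hρapp : ∀ i, ρ i = i + 1 := fun i => rfl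
  have hρinvapp : ∀ i, ρ⁻¹ i = i - 1 := by
    intro i
    apply Equiv.injective ρ
    rw [Equiv.Perm.inv_def, Equiv.apply_symm_apply, hρapp]
    ring
  have htwo : ((2 : ℕ) : ZMod g) ≠ 0 := by
    rw [Ne, ZMod.natCast_eq_zero_iff]
    intro h
    have := Nat.le_of_dvd (by norm_num) h
    omega
  -- every nonvanishing permutation is ρ or ρ⁻¹
  have hterm : ∀ σ : Equiv.Perm (ZMod g), σ ≠ ρ → σ ≠ ρ⁻¹ →
      ∏ i, (B.submatrix c c) (σ i) i = 0 := by
    intro σ hσ1 hσ2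
    by_contra h
    have hne : ∀ i, B (c (σ i)) (c i) ≠ 0 := fun i =>
      Finset.prod_ne_zero_iff.1 h i (Finset.mem_univ i)
    have hstep : ∀ i, σ i = i + 1 ∨ σ i = i - 1 := by
      intro i
      rcases hnochord (σ i) i (hne i) with h' | h'
      · right; linear_combination -h'
      · left; exact h'
    set S : Finset (ZMod g) := Finset.univ.filter (fun i => σ i = i + 1) with hS
    have hsum0 : ∑ i : ZMod g, (σ i - i) = 0 := by
      rw [Finset.sum_sub_distrib]
      rw [Equiv.sum_comp σ (fun i => i)]
      ring
    have hsplit : ∑ i : ZMod g, (σ i - i) =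
        ∑ i ∈ S, (σ i - i) + ∑ i ∈ Sᶜ, (σ i - i) :=
      (Finset.sum_add_sum_compl S _).symm
    have hS1 : ∑ i ∈ S, (σ i - i) = (S.card : ZMod g) := by
      rw [Finset.sum_congr rfl (fun i hi => ?_), Finset.sum_const, nsmul_eq_mul, mul_one]
      have := (Finset.mem_filter.1 hi).2
      rw [this]; ring
    have hS2 : ∑ i ∈ Sᶜ, (σ i - i) = -(Sᶜ.card : ZMod g) := by
      rw [Finset.sum_congr rfl (fun i hi => ?_), Finset.sum_const, nsmul_eq_mul, mul_neg_one]
      have hi' : ¬ (σ i = i + 1) := by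
        have := Finset.mem_compl.1 hi
        simpa [hS] using this
      rcases hstep i with h' | h'
      · exact absurd h' hi'
      · rw [h']; ring
    have hcardc : Sᶜ.card = g - S.card := by
      rw [Finset.card_compl]
      congr 1
      simp [ZMod.card]
    have hSle : S.card ≤ g := by
      have := Finset.card_le_univ S
      simpa [ZMod.card] using this
    have hkey : ((2 * S.card : ℕ) : ZMod g) = 0 := by
      have h0 : (S.card : ZMod g) - ((g - S.card : ℕ) : ZMod g) = 0 := by
        rw [hsplit, hS1, hS2, hcardc] at hsum0
        linear_combination hsum0
      have h1 : ((g - S.card : ℕ) : ZMod g) = -(S.card : ZMod g) := by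
        push_cast [Nat.cast_sub hSle]
        rw [ZMod.natCast_self]; ring
      rw [h1] at h0
      push_cast
      linear_combination h0
    rw [ZMod.natCast_eq_zero_iff] at hkey
    have hdvd : g ∣ S.card := (Nat.Coprime.dvd_of_dvd_mul_left (hgodd.coprime_two_right) hkey)
    rcases Nat.eq_zero_or_pos S.card with h0 | hpos
    · -- σ = ρ⁻¹
      apply hσ2
      ext i
      have : i ∉ S := by
        intro hi
        rw [Finset.card_eq_zero.1 h0] at hi
        exact absurd hi (Finset.notMem_empty i)
      have hi' : ¬ (σ i = i + 1) := by simpa [hS] using this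
      rcases hstep i with h' | h'
      · exact absurd h' hi'
      · rw [h', hρinvapp]
    · -- σ = ρ
      have hcardeq : S.card = g := le_antisymm hSle (Nat.le_of_dvd hpos hdvd)
      apply hσ1
      ext i
      have hi : i ∈ S := by
        have : S = Finset.univ := Finset.eq_univ_of_card S (by rw [hcardeq]; simp [ZMod.card])
        rw [this]; exact Finset.mem_univ i
      have := (Finset.mem_filter.1 hi).2
      rw [this, hρapp]
  -- collapse the determinant
  have hρne : ρ ≠ ρ⁻¹ := by
    intro h
    have := congrArg (fun σ : Equiv.Perm (ZMod g) => σ 0) h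
    simp only [hρapp, hρinvapp] at this
    apply htwo
    push_cast
    linear_combination this
  rw [Matrix.det_apply']
  rw [← Finset.sum_subset (Finset.subset_univ ({ρ, ρ⁻¹} : Finset (Equiv.Perm (ZMod g))))
    (fun σ _ hσ => by
      have h1 : σ ≠ ρ := fun h => hσ (by simp [h])
      have h2 : σ ≠ ρ⁻¹ := fun h => hσ (by simp [h])
      rw [hterm σ h1 h2, mul_zero])]
  rw [Finset.sum_pair hρne]
  have hP : ∀ i : ZMod g, (B.submatrix c c) (ρ i) i = B (c i) (c (i + 1)) := by
    intro i
    rw [hρapp]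
    exact hsym.apply _ _
  have hPinv : ∏ i, (B.submatrix c c) (ρ⁻¹ i) i = ∏ i, (B.submatrix c c) (ρ i) i := by
    rw [← Equiv.prod_comp ρ (fun i => (B.submatrix c c) (ρ⁻¹ i) i)]
    apply Finset.prod_congr rfl
    intro i _
    rw [Equiv.Perm.inv_def, Equiv.symm_apply_apply, hρapp]
    exact (hsym.apply _ _).symm
  rw [hPinv]
  have hsigninv : (Equiv.Perm.sign ρ⁻¹ : ℝ) = (Equiv.Perm.sign ρ : ℝ) := by
    rw [Equiv.Perm.sign_inv]
  rw [hsigninv]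
  have hPne : ∏ i, (B.submatrix c c) (ρ i) i ≠ 0 := by
    rw [Finset.prod_ne_zero_iff]
    intro i _
    rw [hP]
    exact hce i
  have hsne : (Equiv.Perm.sign ρ : ℝ) ≠ 0 := by
    rcases Int.units_eq_one_or (Equiv.Perm.sign ρ) with h | h <;> simp [h]
  intro hzero
  have : (Equiv.Perm.sign ρ : ℝ) * ∏ i, (B.submatrix c c) (ρ i) i = 0 := by
    linarith [hzero]
  exact (mul_ne_zero hsne hPne) this

theorem stmt15 {n : ℕ} (B : Matrix (Fin n) (Fin n) ℝ) (hsym : B.IsSymm)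
    (hdiag : ∀ i, B i i = 0) (g : ℕ) (hgodd : Odd g) (hg3 : 3 ≤ g)
    (hcycle : ∃ c : ZMod g → Fin n, Function.Injective c ∧
      ∀ i, B (c i) (c (i + 1)) ≠ 0)
    (hmin : ∀ l : ℕ, 3 ≤ l → Odd l →
      (∃ c : ZMod l → Fin n, Function.Injective c ∧ ∀ i, B (c i) (c (i + 1)) ≠ 0) →
      g ≤ l) :
    (∀ μ : Finset (Fin n), Odd μ.card → μ.card < g →
      (B.submatrix (fun x : μ => (x : Fin n)) (fun x : μ => (x : Fin n))).det = 0) ∧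
    (∃ μ : Finset (Fin n), μ.card = g ∧
      (B.submatrix (fun x : μ => (x : Fin n)) (fun x : μ => (x : Fin n))).det ≠ 0) ∧
    IsLeast {m : ℕ | Odd m ∧ ∃ μ : Finset (Fin n), μ.card = m ∧
      (B.submatrix (fun x : μ => (x : Fin n)) (fun x : μ => (x : Fin n))).det ≠ 0} g := by
  obtain ⟨c, hcinj, hce⟩ := hcycle
  haveI : NeZero g := ⟨by omega⟩
  set μ : Finset (Fin n) := Finset.univ.image c with hμ
  have hμcard : μ.card = g := by
    rw [hμ, Finset.card_image_of_injective _ hcinj, Finset.card_univ, ZMod.card]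
  have hmem : ∀ k, c k ∈ μ := fun k => Finset.mem_image_of_mem c (Finset.mem_univ k)
  have hfbij : Function.Bijective (fun k => (⟨c k, hmem k⟩ : {x // x ∈ μ})) := by
    rw [Fintype.bijective_iff_injective_and_card]
    exact ⟨fun k k' h => hcinj (congrArg Subtype.val h),
      by rw [Fintype.card_coe, hμcard, ZMod.card]⟩
  have hdeteq : (B.submatrix (fun x : μ => (x : Fin n)) (fun x : μ => (x : Fin n))).det
      = (B.submatrix c c).det := by
    rw [← Matrix.det_submatrix_equiv_self (Equiv.ofBijective _ hfbij)]
    rfl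
  have hdetne : (B.submatrix (fun x : μ => (x : Fin n)) (fun x : μ => (x : Fin n))).det ≠ 0 := by
    rw [hdeteq]
    exact aux_det_cycle B hsym hdiag hgodd hg3 hmin c hcinj hce
  refine ⟨aux_part1 B hsym hdiag g hmin, ⟨μ, hμcard, hdetne⟩,
    ⟨hgodd, μ, hμcard, hdetne⟩, ?_⟩
  rintro m ⟨hmodd, ν, hνcard, hνdet⟩
  by_contra hlt
  push_neg at hlt
  exact hνdet (aux_part1 B hsym hdiag g hmin ν (by rw [hνcard]; exact hmodd)
    (by rw [hνcard]; exact hlt))
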